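/- Let H be a hybrid quantum–classical Hamiltonian on Fin n × Fin m, H = (Matrix.diagonal ε ⊗ₖ 1) + (1 ⊗ₖ H_Q) + ∑ i, (γ i : ℂ) • (Matrix.stdBasisMatrix i i 1 ⊗ₖ S i), let o : Fin n → ℝ and let O_Q be an m×m complex matrix. If the total additive observable commutes with H, i.e. Commute ((Matrix.diagonal o ⊗ₖ 1) + (1 ⊗ₖ O_Q)) H, then the local quantum observable already commutes with H: Commute (1 ⊗ₖ O_Q) H. (Corollary of Theorem 1: under a conservation law for a global additive quantity, a classical sector governed by a hybrid Hamiltonian cannot change the corresponding local quantum observable.) -/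

import Mathlib

open Matrix Kronecker

lemma diag_comm_std (n : ℕ) (d : Fin n → ℂ) (i : Fin n) :
    Matrix.diagonal d * Matrix.single i i 1 =
      Matrix.single i i 1 * Matrix.diagonal d := by
  ext a b
  rw [Matrix.diagonal_mul, Matrix.mul_diagonal]
  by_cases h : a = i ∧ b = i
  · rw [h.1, h.2, mul_comm]
  · have : Matrix.single i i (1:ℂ) a b = 0 := by
      simp [Matrix.single]
      aesop
    rw [this, mul_zero, zero_mul]

/-- Corollary of Theorem 1: if the total additive observable
O_C ⊗ 1 + 1 ⊗ O_Q is conserved (commutes with the hybrid Hamiltonian), then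
the local quantum observable 1 ⊗ O_Q already commutes with it. -/
theorem quantum_observable_conserved_of_total_conserved
    (n m : ℕ)
    (ε γ : Fin n → ℝ)
    (H_Q : Matrix (Fin m) (Fin m) ℂ)
    (S : Fin n → Matrix (Fin m) (Fin m) ℂ)
    (H : Matrix (Fin n × Fin m) (Fin n × Fin m) ℂ)
    (hH : H = (Matrix.diagonal (fun i => (ε i : ℂ)) ⊗ₖ 1)
        + ((1 : Matrix (Fin n) (Fin n) ℂ) ⊗ₖ H_Q)
        + ∑ i : Fin n, (γ i : ℂ) • (Matrix.single i i 1 ⊗ₖ S i))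
    (o : Fin n → ℝ) (O_Q : Matrix (Fin m) (Fin m) ℂ)
    (hcons : Commute ((Matrix.diagonal (fun i => (o i : ℂ)) ⊗ₖ (1 : Matrix (Fin m) (Fin m) ℂ))
        + ((1 : Matrix (Fin n) (Fin n) ℂ) ⊗ₖ O_Q)) H) :
    Commute ((1 : Matrix (Fin n) (Fin n) ℂ) ⊗ₖ O_Q) H := by
  have hclass : Commute
      (Matrix.diagonal (fun i => (o i : ℂ)) ⊗ₖ (1 : Matrix (Fin m) (Fin m) ℂ)) H := by
    subst hH
    refine Commute.add_right (Commute.add_right ?_ ?_) ?_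
    · show _ * _ = _ * _
      rw [← Matrix.mul_kronecker_mul, ← Matrix.mul_kronecker_mul,
        Matrix.diagonal_mul_diagonal, Matrix.diagonal_mul_diagonal, one_mul]
      have : (fun i => (o i : ℂ) * (ε i : ℂ)) = fun i => (ε i : ℂ) * (o i : ℂ) :=
        funext fun i => mul_comm _ _
      rw [this]
    · show _ * _ = _ * _
      rw [← Matrix.mul_kronecker_mul, ← Matrix.mul_kronecker_mul,
        mul_one, one_mul, mul_one, one_mul]
    · refine Commute.sum_right _ _ _ fun i _ => Commute.smul_right ?_ _
      show _ * _ = _ * _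
      rw [← Matrix.mul_kronecker_mul, ← Matrix.mul_kronecker_mul,
        mul_one, one_mul, diag_comm_std]
  have := hcons.sub_left hclass.symm.symm
  -- (A + B) - A = B
  simpa [add_sub_cancel_left] using (hcons.sub_left hclass)
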